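/- In the idempotent FIFO work-stealing operational model, tasks can be extracted an unbounded number of times: for every positive integer z, there exists an interleaved execution with z Put operations of distinct tasks such that, for each i ∈ {0,...,z−1}, the i-th inserted task is returned by at least i+1 distinct extraction operations. -/

import Mathlib

/-- Shared state of the idempotent FIFO work-stealing operational model:
an array `tasks`, shared integers `head` and `tail`, and the owner's local
saved copy of `head` (`some h` when the owner is in the middle of a `Take`,
between its read of `tasks[head]` and its write of `head`). -/
structure IState where
  tasks : ℕ → ℕ
  head : ℕ
  tail : ℕ
  ownerLocal : Option ℕ

/-- Atomic events: `put x` (owner inserts `x`), `ownerRead x` (the owner's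
first step of a `Take`: it reads `x = tasks[head]` and saves `head` locally),
`ownerWrite` (the owner's second step of a `Take`: it writes its locally
computed `head + 1`, overwriting any thief updates), and `steal x`
(a complete atomic `Steal` returning `x`). -/
inductive IEv where
  | put (x : ℕ) : IEv
  | ownerRead (x : ℕ) : IEv
  | ownerWrite : IEv
  | steal (x : ℕ) : IEv

/-- Interleaving semantics of the atomic steps. -/
inductive IStep : IState → IEv → IState → Prop
  | put (s : IState) (x : ℕ) :
      IStep s (.put x) ⟨Function.update s.tasks s.tail x, s.head, s.tail + 1, s.ownerLocal⟩
  | ownerRead (s : IState) (hl : s.ownerLocal = none) (hne : s.head ≠ s.tail) :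
      IStep s (.ownerRead (s.tasks s.head)) ⟨s.tasks, s.head, s.tail, some s.head⟩
  | ownerWrite (s : IState) (h : ℕ) (hl : s.ownerLocal = some h) :
      IStep s .ownerWrite ⟨s.tasks, h + 1, s.tail, none⟩
  | steal (s : IState) (hne : s.head ≠ s.tail) :
      IStep s (.steal (s.tasks s.head)) ⟨s.tasks, s.head + 1, s.tail, s.ownerLocal⟩

/-- Executions from the initial state (`head = tail = 0`, owner idle). -/
inductive IExec : List IEv → IState → Prop
  | nil : IExec [] ⟨fun _ => 0, 0, 0, none⟩
  | snoc {tr : List IEv} {s : IState} {e : IEv} {s' : IState} :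
      IExec tr s → IStep s e s' → IExec (tr ++ [e]) s'

/-- The tasks inserted by `Put` operations, in order. -/
def iPuts (tr : List IEv) : List ℕ :=
  tr.filterMap fun e => match e with | .put x => some x | _ => none

/-- Number of extraction operations (`Take`s, identified by their read step,
and `Steal`s) returning the task `v`. -/
def iRetCount (tr : List IEv) (v : ℕ) : ℕ :=
  tr.countP fun e => match e with
    | .ownerRead x => x == v
    | .steal x => x == v
    | _ => false

/-- Multi-step relation. -/
inductive ISteps : IState → List IEv → IState → Prop
  | nil (s : IState) : ISteps s [] s
  | cons {s s' s'' : IState} {e : IEv} {tr : List IEv} :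
      IStep s e s' → ISteps s' tr s'' → ISteps s (e :: tr) s''

theorem ISteps.append {s s' s'' : IState} {tr tr' : List IEv}
    (h : ISteps s tr s') (h' : ISteps s' tr' s'') : ISteps s (tr ++ tr') s'' := by
  induction h with
  | nil => simpa using h'
  | cons hst _ ih => exact .cons hst (ih h')

theorem IExec.of_steps_aux {tr₀ : List IEv} {s : IState} (h : IExec tr₀ s) :
    ∀ {tr : List IEv} {s' : IState}, ISteps s tr s' → IExec (tr₀ ++ tr) s' := by
  intro tr s' hst
  induction hst generalizing tr₀ with
  | nil => simpa using h
  | @cons s s' s'' e tr hstep _ ih =>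
      have := ih (IExec.snoc h hstep)
      simpa using this

theorem IExec.of_steps {tr : List IEv} {s : IState}
    (h : ISteps ⟨fun _ => 0, 0, 0, none⟩ tr s) : IExec tr s := by
  simpa using IExec.nil.of_steps_aux h

/-- The array after putting the list `l` starting at position `t`. -/
def putArr (f : ℕ → ℕ) (t : ℕ) : List ℕ → (ℕ → ℕ)
  | [] => f
  | x :: l => putArr (Function.update f t x) (t + 1) l

theorem putArr_lt (l : List ℕ) : ∀ (f : ℕ → ℕ) (t j : ℕ), j < t → putArr f t l j = f j := by
  induction l with
  | nil => intro f t j _; rfl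
  | cons x l ih =>
      intro f t j hj
      rw [putArr, ih _ _ _ (by omega), Function.update_of_ne (by omega)]

theorem putArr_get (l : List ℕ) : ∀ (f : ℕ → ℕ) (t j : ℕ), j < l.length →
    putArr f t l (t + j) = l.getD j 0 := by
  induction l with
  | nil => intro f t j hj; simp at hj
  | cons x l ih =>
      intro f t j hj
      cases j with
      | zero =>
          rw [putArr, putArr_lt l _ _ _ (by omega)]
          simp
      | succ j =>
          have : t + (j + 1) = (t + 1) + j := by omega
          rw [putArr, this, ih _ _ _ (by simpa using hj)]
          simp

theorem put_steps (l : List ℕ) : ∀ (f : ℕ → ℕ) (h t : ℕ) (o : Option ℕ),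
    ISteps ⟨f, h, t, o⟩ (l.map IEv.put) ⟨putArr f t l, h, t + l.length, o⟩ := by
  induction l with
  | nil => intro f h t o; simpa [putArr] using ISteps.nil _
  | cons x l ih =>
      intro f h t o
      refine ISteps.cons (IStep.put ⟨f, h, t, o⟩ x) ?_
      have := ih (Function.update f t x) h (t + 1) o
      have harith : t + 1 + l.length = t + (x :: l).length := by simp; omega
      rw [harith] at this
      exact this

/-- The array after all `z` puts: `j ↦ j` on `[0, z)`. -/
def tasksZ (z : ℕ) : ℕ → ℕ := putArr (fun _ => 0) 0 (List.range z)

theorem tasksZ_lt {z j : ℕ} (hj : j < z) : tasksZ z j = j := by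
  have := putArr_get (List.range z) (fun _ => 0) 0 j (by simpa using hj)
  simpa [tasksZ, List.getD_eq_getElem?_getD, hj] using this

/-- Round `k`: owner reads task `k`, thieves steal everything from `k` on,
then the owner's stale write sets `head := k + 1`. -/
def roundTr (z k : ℕ) : List IEv :=
  IEv.ownerRead k :: ((List.range' k (z - k)).map IEv.steal ++ [IEv.ownerWrite])

theorem steal_steps (z : ℕ) : ∀ (n h : ℕ) (o : Option ℕ), h + n = z →
    ISteps ⟨tasksZ z, h, z, o⟩ ((List.range' h n).map IEv.steal) ⟨tasksZ z, z, z, o⟩ := by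
  intro n
  induction n with
  | zero => intro h o he; subst he; simpa using ISteps.nil _
  | succ n ih =>
      intro h o he
      rw [List.range'_succ, List.map_cons]
      have hst := IStep.steal ⟨tasksZ z, h, z, o⟩ (show h ≠ z by omega)
      rw [show (⟨tasksZ z, h, z, o⟩ : IState).tasks (⟨tasksZ z, h, z, o⟩ : IState).head
            = h from tasksZ_lt (show h < z by omega)] at hst
      exact ISteps.cons hst (ih (h + 1) o (by omega))

theorem round_steps (z k : ℕ) (hk : k < z) :
    ISteps ⟨tasksZ z, k, z, none⟩ (roundTr z k) ⟨tasksZ z, k + 1, z, none⟩ := by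
  have hr := IStep.ownerRead ⟨tasksZ z, k, z, none⟩ rfl (show k ≠ z by omega)
  rw [show (⟨tasksZ z, k, z, none⟩ : IState).tasks (⟨tasksZ z, k, z, none⟩ : IState).head
        = k from tasksZ_lt hk] at hr
  refine ISteps.cons hr ?_
  refine ISteps.append (steal_steps z (z - k) k (some k) (by omega)) ?_
  exact ISteps.cons (IStep.ownerWrite ⟨tasksZ z, z, z, some k⟩ k rfl) (ISteps.nil _)

theorem rounds_steps (z : ℕ) : ∀ (n k : ℕ), k + n = z →
    ISteps ⟨tasksZ z, k, z, none⟩ ((List.range' k n).flatMap (roundTr z))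
      ⟨tasksZ z, z, z, none⟩ := by
  intro n
  induction n with
  | zero => intro k he; subst he; simpa using ISteps.nil _
  | succ n ih =>
      intro k he
      rw [List.range'_succ, List.flatMap_cons]
      exact ISteps.append (round_steps z k (by omega)) (ih (k + 1) (by omega))

theorem steal_mem_roundTr {z k i : ℕ} (hk : k ≤ i) (hi : i < z) :
    IEv.steal i ∈ roundTr z k := by
  have hmem : i ∈ List.range' k (z - k) := by
    rw [List.mem_range']
    exact ⟨i - k, by omega, by omega⟩
  simp only [roundTr, List.mem_cons, List.mem_append, List.mem_map]
  exact Or.inr (Or.inl ⟨i, hmem, rfl⟩)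

theorem replicate_sublist (z i : ℕ) (hi : i < z) : ∀ (n k : ℕ), k + n = z → k ≤ i →
    List.Sublist (List.replicate (i + 1 - k) (IEv.steal i)) ((List.range' k n).flatMap (roundTr z)) := by
  intro n
  induction n with
  | zero => intro k he hk; omega
  | succ n ih =>
      intro k he hk
      rw [List.range'_succ, List.flatMap_cons]
      rcases Nat.lt_or_ge k i with hlt | hge
      · have : i + 1 - k = 1 + (i + 1 - (k + 1)) := by omega
        rw [this, List.replicate_add]
        refine List.Sublist.append ?_ (ih (k + 1) (by omega) (by omega))
        simpa using (steal_mem_roundTr hk hi)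
      · rw [show i + 1 - k = 1 from by omega, List.replicate_one]
        exact (List.singleton_sublist.mpr (steal_mem_roundTr hk hi)).trans
          (List.sublist_append_left _ _)

theorem iPuts_append (a b : List IEv) : iPuts (a ++ b) = iPuts a ++ iPuts b :=
  List.filterMap_append

theorem iPuts_puts (l : List ℕ) : iPuts (l.map IEv.put) = l := by
  induction l with
  | nil => rfl
  | cons x l ih => simpa [iPuts, List.filterMap_cons] using ih

theorem iPuts_rounds (z : ℕ) : iPuts ((List.range z).flatMap (roundTr z)) = [] := by
  rw [iPuts, List.filterMap_eq_nil_iff]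
  intro e he
  rw [List.mem_flatMap] at he
  obtain ⟨k, -, hmem⟩ := he
  simp only [roundTr, List.mem_cons, List.mem_append, List.mem_map] at hmem
  rcases hmem with h | h | h
  · subst h; rfl
  · obtain ⟨a, -, h⟩ := h; subst h; rfl
  · simp at h; subst h; rfl

/-- in the idempotent FIFO work-stealing operational model,
tasks can be extracted an unbounded number of times: for every `z > 0` there
is an execution with `z` `Put` operations of pairwise distinct tasks in which,
for every `i < z`, the `i`-th inserted task is returned by at least `i + 1`
distinct extraction operations. -/
theorem idempotent_fifo_unbounded_extraction (z : ℕ) (hz : 0 < z) :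
    ∃ (tr : List IEv) (s : IState), IExec tr s ∧
      (iPuts tr).length = z ∧ (iPuts tr).Nodup ∧
      ∀ i < z, i + 1 ≤ iRetCount tr ((iPuts tr).getD i 0) := by
  refine ⟨(List.range z).map IEv.put ++ (List.range z).flatMap (roundTr z),
    ⟨tasksZ z, z, z, none⟩, ?_, ?_, ?_, ?_⟩
  · apply IExec.of_steps
    have h1 : ISteps ⟨fun _ => 0, 0, 0, none⟩ ((List.range z).map IEv.put)
        ⟨tasksZ z, 0, z, none⟩ := by
      have := put_steps (List.range z) (fun _ => 0) 0 0 none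
      simpa [tasksZ] using this
    have h2 : ISteps ⟨tasksZ z, 0, z, none⟩ ((List.range z).flatMap (roundTr z))
        ⟨tasksZ z, z, z, none⟩ := by
      have := rounds_steps z z 0 (by omega)
      simpa [List.range_eq_range'] using this
    exact h1.append h2
  · rw [iPuts_append, iPuts_puts, iPuts_rounds]
    simp
  · rw [iPuts_append, iPuts_puts, iPuts_rounds]
    simpa using (List.nodup_range : (List.range z).Nodup)
  · intro i hi
    have hget : (iPuts ((List.range z).map IEv.put ++
        (List.range z).flatMap (roundTr z))).getD i 0 = i := by
      rw [iPuts_append, iPuts_puts, iPuts_rounds, List.append_nil]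
      simp [List.getD_eq_getElem?_getD, hi]
    rw [hget]
    have hsub : List.Sublist (List.replicate (i + 1) (IEv.steal i))
        ((List.range z).map IEv.put ++ (List.range z).flatMap (roundTr z)) := by
      have h1 := replicate_sublist z i hi z 0 (by omega) (by omega)
      simp only [Nat.sub_zero] at h1
      rw [← List.range_eq_range'] at h1
      exact h1.trans (List.sublist_append_right _ _)
    have := hsub.countP_le (p := fun e => match e with
      | IEv.ownerRead x => x == i
      | IEv.steal x => x == i
      | _ => false)
    rw [iRetCount]
    refine le_trans ?_ this
    rw [List.countP_replicate]
    simp
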